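/- arXiv:1810.05356 — 5 statements merged into one kernel-verified Lean document; each statement's English description precedes it below -/
import Mathlib

section
/- Let (X, Σ, μ) be a finite measure space and E a σ-order continuous Banach lattice. Suppose (f_n) is a sequence of Bochner integrable functions X → E such that: (i) for a.e. w, f_n(w) → f(w) in unbounded order (i.e., |f_n(w) − f(w)| ∧ u order-converges to 0 for every u ∈ E₊); (ii) the set {f_n(w) : n} ∪ {f(w)} is suitably almost order bounded in B(X,E,μ), i.e., for every ε > 0 there is g ∈ B(X,E,μ)₊ with each f_n in [−g,g] + ε·ball; (iii) sup_n ∫ ‖f_n(w)‖ dμ < ∞. Then f is Bochner integrable and ∫ f_n dμ → ∫ f dμ in norm of E. -/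
open MeasureTheory Filter Topology

/-- Order convergence of a sequence: there is a sequence `g_k ↓ 0` dominating the tails. -/
def OrderConvSeq {G : Type*} [Lattice G] [AddCommGroup G] (x : ℕ → G) (a : G) : Prop :=
  ∃ g : ℕ → G, Antitone g ∧ IsGLB (Set.range g) 0 ∧
    ∀ k, ∃ N, ∀ n ≥ N, |x n - a| ≤ g k

/-- Unbounded order convergence: `|x_n − a| ⊓ u` order-converges to `0` for every `u ≥ 0`. -/
def UoConvSeq {G : Type*} [Lattice G] [AddCommGroup G] (x : ℕ → G) (a : G) : Prop :=
  ∀ u : G, 0 ≤ u → OrderConvSeq (fun n => |x n - a| ⊓ u) 0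

/-- σ-order continuity of the norm. -/
def SigmaOrderCont (G : Type*) [NormedAddCommGroup G] [Lattice G] [HasSolidNorm G]
    [IsOrderedAddMonoid G] : Prop :=
  ∀ x : ℕ → G, Antitone x → IsGLB (Set.range x) 0 →
    Tendsto (fun n => ‖x n‖) atTop (𝓝 0)

section AuxLattice
variable {G : Type*} [NormedAddCommGroup G] [Lattice G] [HasSolidNorm G] [IsOrderedAddMonoid G]

lemma aux_abs_sub (a b : G) : |a - b| ≤ |a| + |b| := by
  rw [sub_eq_add_neg]
  exact (abs_add_le a (-b)).trans (by rw [abs_neg])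

lemma aux_trans (x y c : G) : |y| ⊓ c ≤ |x| ⊓ c + |y - x| := by
  have h1 : |y| ≤ |x| + |y - x| := by
    have h2 : y = x + (y - x) := by abel
    calc |y| = |x + (y - x)| := by rw [← h2]
      _ ≤ |x| + |y - x| := abs_add_le _ _
  calc |y| ⊓ c ≤ (|x| + |y - x|) ⊓ c := inf_le_inf_right _ h1
    _ ≤ (|x| + |y - x|) ⊓ (c + |y - x|) :=
        inf_le_inf_left _ (le_add_of_nonneg_right (abs_nonneg _))
    _ = |x| ⊓ c + |y - x| := (inf_add _ _ _).symm

lemma aux_norm (x y c : G) (hyc : |y| ≤ c) : ‖y‖ ≤ ‖|x| ⊓ c‖ + ‖y - x‖ := by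
  have h := aux_trans x y c
  rw [inf_eq_left.mpr hyc] at h
  have h2 : ‖y‖ ≤ ‖|x| ⊓ c + |y - x|‖ := by
    rw [← norm_abs_eq_norm y]
    exact norm_le_norm_of_abs_le_abs ((abs_abs y).symm ▸ h.trans (le_abs_self _))
  exact h2.trans ((norm_add_le _ _).trans (by rw [norm_abs_eq_norm]))

lemma aux_inf_add_inf (a b v : G) (ha : 0 ≤ a) (hb : 0 ≤ b) (hv : 0 ≤ v) :
    (a + b) ⊓ v ≤ a ⊓ v + b ⊓ v := by
  have h1 : (a + b) ⊓ v ≤ a ⊓ v + b := by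
    calc (a + b) ⊓ v ≤ (a + b) ⊓ (v + b) := inf_le_inf_left _ (le_add_of_nonneg_right hb)
      _ = a ⊓ v + b := (inf_add _ _ _).symm
  calc (a + b) ⊓ v ≤ (a ⊓ v + b) ⊓ v := le_inf h1 inf_le_right
    _ ≤ (a ⊓ v + b) ⊓ (a ⊓ v + v) :=
        inf_le_inf_left _ (le_add_of_nonneg_left (le_inf ha hv))
    _ = a ⊓ v + b ⊓ v := (add_inf _ _ _).symm

end AuxLattice

lemma uo_norm_tendsto {E : Type*} [NormedAddCommGroup E] [Lattice E] [HasSolidNorm E]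
    [IsOrderedAddMonoid E] (hE : SigmaOrderCont E)
    {x : ℕ → E} {a : E} (h : UoConvSeq x a) {u : E} (hu : 0 ≤ u) :
    Tendsto (fun n => ‖|x n - a| ⊓ u‖) atTop (𝓝 0) := by
  obtain ⟨G, hmono, hglb, htail⟩ := h u hu
  have hGnorm := hE G hmono hglb
  rw [Metric.tendsto_atTop] at hGnorm ⊢
  intro ε hε
  obtain ⟨K, hK⟩ := hGnorm ε hε
  obtain ⟨N, hN⟩ := htail K
  refine ⟨N, fun n hn => ?_⟩
  have h0 : (0:E) ≤ |x n - a| ⊓ u := le_inf (abs_nonneg _) hu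
  have hle : |x n - a| ⊓ u ≤ G K := by
    have := hN n hn
    simpa [abs_of_nonneg h0] using this
  have hnorm : ‖|x n - a| ⊓ u‖ ≤ ‖G K‖ := by
    refine norm_le_norm_of_abs_le_abs ?_
    rw [abs_of_nonneg h0, abs_of_nonneg (h0.trans hle)]
    exact hle
  have hK' := hK K le_rfl
  rw [Real.dist_eq, sub_zero] at hK' ⊢
  calc |‖|x n - a| ⊓ u‖| = ‖|x n - a| ⊓ u‖ := abs_of_nonneg (norm_nonneg _)
    _ ≤ ‖G K‖ := hnorm
    _ ≤ |‖G K‖| := le_abs_self _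
    _ < ε := hK'

/-- uo-convergent, almost order bounded (in `B(X,E,μ)`), norm bounded sequences
of Bochner integrable functions with values in a σ-order continuous Banach lattice have a
Bochner integrable limit, and the Bochner integrals converge in norm. -/
theorem stmt_4 {X : Type*} [MeasurableSpace X] (μ : Measure X) [IsFiniteMeasure μ]
    {E : Type*} [NormedAddCommGroup E] [Lattice E] [HasSolidNorm E] [IsOrderedAddMonoid E]
    [NormedSpace ℝ E] [CompleteSpace E]
    (hE : SigmaOrderCont E)
    (f : ℕ → X → E) (g : X → E) (hf : ∀ n, Integrable (f n) μ)
    (huo : ∀ᵐ w ∂μ, UoConvSeq (fun n => f n w) (g w))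
    (haob : ∀ ε > (0:ℝ), ∃ u : Lp E 1 μ, 0 ≤ u ∧
      ∀ n, ∃ h : Lp E 1 μ, |h| ≤ u ∧ ‖(memLp_one_iff_integrable.mpr (hf n)).toLp (f n) - h‖ ≤ ε)
    (hbd : ∃ M : ℝ, ∀ n, ∫ w, ‖f n w‖ ∂μ ≤ M) :
    Integrable g μ ∧
    Tendsto (fun n => ∫ w, f n w ∂μ) atTop (𝓝 (∫ w, g w ∂μ)) := by
  classical
  set F : ℕ → Lp E 1 μ := fun n => (memLp_one_iff_integrable.mpr (hf n)).toLp (f n) with hFdef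
  have hFcoe : ∀ n, ⇑(F n) =ᵐ[μ] f n := fun n => MemLp.coeFn_toLp _
  -- Step 1: the sequence `F` is Cauchy in `L¹`.
  have key : ∀ ε : ℝ, 0 < ε → ∃ N : ℕ, ∀ m ≥ N, ∀ n ≥ N, ‖F m - F n‖ ≤ 5 * ε := by
    intro ε hε
    obtain ⟨u, hu, hW⟩ := haob ε hε
    choose h hh1 hh2 using hW
    set v : Lp E 1 μ := u + u with hvdef
    have hucoe : ∀ᵐ w ∂μ, 0 ≤ u w := by
      have := (Lp.coeFn_nonneg u).mpr hu
      filter_upwards [this] with w hw using hw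
    -- identification of the `L¹`-norm of truncation with an integral
    have eqn : ∀ m n : ℕ, (fun w => ‖(⇑(|F m - F n| ⊓ v)) w‖) =ᵐ[μ]
        fun w => ‖|f m w - f n w| ⊓ (u w + u w)‖ := by
      intro m n
      filter_upwards [Lp.coeFn_inf (|F m - F n|) v, Lp.coeFn_abs (F m - F n),
        Lp.coeFn_sub (F m) (F n), hFcoe m, hFcoe n, Lp.coeFn_add u u] with w w1 w2 w3 w4 w5 w6
      rw [w1, Pi.inf_apply, w2, w3, Pi.sub_apply, w4, w5, w6, Pi.add_apply]
    have hVnorm : ∀ m n : ℕ, ‖|F m - F n| ⊓ v‖ = ∫ w, ‖|f m w - f n w| ⊓ (u w + u w)‖ ∂μ := by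
      intro m n
      rw [L1.norm_eq_integral_norm]
      exact integral_congr_ae (eqn m n)
    have hmeas : ∀ p : ℕ × ℕ,
        AEStronglyMeasurable (fun w => ‖|f p.1 w - f p.2 w| ⊓ (u w + u w)‖) μ :=
      fun p => ((Lp.aestronglyMeasurable (|F p.1 - F p.2| ⊓ v)).norm).congr (eqn p.1 p.2)
    -- dominated convergence over the product filter
    have hDCT : Tendsto (fun p : ℕ × ℕ => ∫ w, ‖|f p.1 w - f p.2 w| ⊓ (u w + u w)‖ ∂μ)
        (atTop ×ˢ atTop) (𝓝 0) := by
      have h00 : (0:ℝ) = ∫ (_ : X), (0:ℝ) ∂μ := by simp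
      rw [h00]
      refine tendsto_integral_filter_of_dominated_convergence (fun w => ‖u w + u w‖)
        (Eventually.of_forall hmeas) (Eventually.of_forall fun p => ?_) ?_ ?_
      · filter_upwards [hucoe] with w hw
        have h0 : (0:E) ≤ |f p.1 w - f p.2 w| ⊓ (u w + u w) :=
          le_inf (abs_nonneg _) (add_nonneg hw hw)
        rw [norm_norm]
        refine norm_le_norm_of_abs_le_abs ?_
        rw [abs_of_nonneg h0]
        exact inf_le_right.trans (le_abs_self _)
      · exact ((L1.integrable_coeFn u).add (L1.integrable_coeFn u)).norm
      · filter_upwards [huo, hucoe] with w hw hw0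
        have huv : (0:E) ≤ u w + u w := add_nonneg hw0 hw0
        have ha : Tendsto (fun n => ‖|f n w - g w| ⊓ (u w + u w)‖) atTop (𝓝 0) :=
          uo_norm_tendsto hE hw huv
        have hsum : Tendsto (fun p : ℕ × ℕ =>
            ‖|f p.1 w - g w| ⊓ (u w + u w)‖ + ‖|f p.2 w - g w| ⊓ (u w + u w)‖)
            (atTop ×ˢ atTop) (𝓝 0) := by
          have := (ha.comp tendsto_fst).add (ha.comp tendsto_snd)
          simpa using this
        refine squeeze_zero (fun p => norm_nonneg _) (fun p => ?_) hsum
        have e1 : |f p.1 w - f p.2 w| ≤ |f p.1 w - g w| + |f p.2 w - g w| := by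
          have e0 : f p.1 w - f p.2 w = (f p.1 w - g w) - (f p.2 w - g w) := by abel
          rw [e0]
          exact aux_abs_sub _ _
        have e2 : |f p.1 w - f p.2 w| ⊓ (u w + u w) ≤
            |f p.1 w - g w| ⊓ (u w + u w) + |f p.2 w - g w| ⊓ (u w + u w) :=
          (inf_le_inf_right _ e1).trans
            (aux_inf_add_inf _ _ _ (abs_nonneg _) (abs_nonneg _) huv)
        have e3 : ‖|f p.1 w - f p.2 w| ⊓ (u w + u w)‖ ≤
            ‖|f p.1 w - g w| ⊓ (u w + u w) + |f p.2 w - g w| ⊓ (u w + u w)‖ := by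
          refine norm_le_norm_of_abs_le_abs ?_
          rw [abs_of_nonneg (le_inf (abs_nonneg _) huv)]
          exact e2.trans (le_abs_self _)
        exact e3.trans (norm_add_le _ _)
    have hev : ∀ᶠ p : ℕ × ℕ in atTop ×ˢ atTop,
        (∫ w, ‖|f p.1 w - f p.2 w| ⊓ (u w + u w)‖ ∂μ) < ε := hDCT.eventually_lt_const hε
    rw [prod_atTop_atTop_eq, eventually_atTop] at hev
    obtain ⟨P, hP⟩ := hev
    refine ⟨max P.1 P.2, fun m hm n hn => ?_⟩
    have hPmn : (∫ w, ‖|f m w - f n w| ⊓ (u w + u w)‖ ∂μ) < ε :=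
      hP (m, n) ⟨(le_max_left _ _).trans hm, (le_max_right _ _).trans hn⟩
    have habs : |h m - h n| ≤ v := by
      refine (aux_abs_sub (h m) (h n)).trans ?_
      exact add_le_add (hh1 m) (hh1 n)
    have est1 : ‖h m - h n‖ ≤ ‖|F m - F n| ⊓ v‖ + ‖(h m - h n) - (F m - F n)‖ :=
      aux_norm (F m - F n) (h m - h n) v habs
    have est2 : ‖(h m - h n) - (F m - F n)‖ ≤ ‖F m - h m‖ + ‖F n - h n‖ := by
      have e : (h m - h n) - (F m - F n) = (F n - h n) - (F m - h m) := by abel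
      rw [e]
      exact (norm_sub_le _ _).trans (by rw [add_comm])
    have tri : ‖F m - F n‖ ≤ ‖F m - h m‖ + ‖h m - h n‖ + ‖h n - F n‖ := by
      have e : F m - F n = (F m - h m) + (h m - h n) + (h n - F n) := by abel
      rw [e]
      exact (norm_add_le _ _).trans (add_le_add_left (norm_add_le _ _) _)
    have hhFn : ‖h n - F n‖ = ‖F n - h n‖ := norm_sub_rev _ _
    calc ‖F m - F n‖ ≤ ‖F m - h m‖ + ‖h m - h n‖ + ‖h n - F n‖ := tri
      _ ≤ ε + (‖|F m - F n| ⊓ v‖ + (‖F m - h m‖ + ‖F n - h n‖)) + ε := by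
          refine add_le_add (add_le_add (hh2 m) (est1.trans (add_le_add_right est2 _))) ?_
          rw [hhFn]; exact hh2 n
      _ ≤ ε + (ε + (ε + ε)) + ε := by
          refine add_le_add (add_le_add_right ?_ _) le_rfl
          refine add_le_add ?_ (add_le_add (hh2 m) (hh2 n))
          rw [hVnorm m n]
          exact hPmn.le
      _ = 5 * ε := by ring
  have hcauchy : CauchySeq F := by
    rw [Metric.cauchySeq_iff]
    intro ε hε
    obtain ⟨N, hN⟩ := key (ε / 6) (by positivity)
    refine ⟨N, fun m hm n hn => ?_⟩
    rw [dist_eq_norm]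
    calc ‖F m - F n‖ ≤ 5 * (ε / 6) := hN m hm n hn
      _ < ε := by linarith
  obtain ⟨hlim, hten⟩ := cauchySeq_tendsto_of_complete hcauchy
  -- a.e. convergent subsequence
  have heLp : Tendsto (fun n => eLpNorm (f n - ⇑hlim) 1 μ) atTop (𝓝 0) := by
    have h1 : ∀ n, eLpNorm (f n - ⇑hlim) 1 μ = ENNReal.ofReal ‖F n - hlim‖ := by
      intro n
      have e : ⇑(F n - hlim) =ᵐ[μ] f n - ⇑hlim := by
        filter_upwards [Lp.coeFn_sub (F n) hlim, hFcoe n] with w w1 w2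
        rw [w1, Pi.sub_apply, w2, Pi.sub_apply]
      rw [← eLpNorm_congr_ae e, Lp.norm_def, ENNReal.ofReal_toReal (Lp.eLpNorm_ne_top _)]
    simp_rw [h1]
    have h2 : Tendsto (fun n => ‖F n - hlim‖) atTop (𝓝 0) :=
      tendsto_iff_norm_sub_tendsto_zero.mp hten
    have := ENNReal.tendsto_ofReal h2
    simpa using this
  have hmeasconv := tendstoInMeasure_of_tendsto_eLpNorm (p := 1) one_ne_zero
    (fun n => (hf n).1) (Lp.aestronglyMeasurable hlim) heLp
  obtain ⟨ns, hns, hae⟩ := hmeasconv.exists_seq_tendsto_ae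
  have heq : g =ᵐ[μ] ⇑hlim := by
    filter_upwards [huo, hae] with w hw1 hw2
    have hten1 : Tendsto (fun i => ‖|f (ns i) w - g w| ⊓ |g w - hlim w|‖) atTop (𝓝 0) :=
      (uo_norm_tendsto hE hw1 (abs_nonneg _)).comp hns.tendsto_atTop
    have hten2 : Tendsto (fun i => ‖f (ns i) w - hlim w‖) atTop (𝓝 0) :=
      tendsto_iff_norm_sub_tendsto_zero.mp hw2
    have hb : ∀ i, ‖g w - hlim w‖ ≤
        ‖|f (ns i) w - g w| ⊓ |g w - hlim w|‖ + ‖f (ns i) w - hlim w‖ := by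
      intro i
      have h := aux_norm (g w - f (ns i) w) (g w - hlim w) (|g w - hlim w|) le_rfl
      rw [abs_sub_comm (g w) (f (ns i) w),
        show (g w - hlim w) - (g w - f (ns i) w) = f (ns i) w - hlim w from by abel] at h
      exact h
    have hle0 : ‖g w - hlim w‖ ≤ 0 := by
      have hsum : Tendsto (fun i => ‖|f (ns i) w - g w| ⊓ |g w - hlim w|‖ +
          ‖f (ns i) w - hlim w‖) atTop (𝓝 0) := by
        have := hten1.add hten2
        simpa using this
      exact ge_of_tendsto' hsum hb
    have : g w - hlim w = 0 := norm_le_zero_iff.mp hle0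
    exact sub_eq_zero.mp this
  constructor
  · exact (L1.integrable_coeFn hlim).congr heq.symm
  · have hcont : Tendsto (fun n => ∫ w, (F n) w ∂μ) atTop (𝓝 (∫ w, hlim w ∂μ)) :=
      (continuous_integral.tendsto hlim).comp hten
    have e1 : ∀ n, ∫ w, (F n) w ∂μ = ∫ w, f n w ∂μ := fun n => integral_congr_ae (hFcoe n)
    have e2 : ∫ w, hlim w ∂μ = ∫ w, g w ∂μ := integral_congr_ae heq.symm
    rw [← e2]
    exact hcont.congr e1
end

section
/- Let X = [0,1] with Lebesgue measure, E = L¹[0,1], and f_n : X → E the constant function f_n(t) = δ_n where δ_n = n·𝟙_{[0,1/n]}. Then δ_n uo-converges to 0 in E (hence f_n(t) → 0 in unbounded order for all t), ‖δ_n‖ = 1, but ∫_X f_n dμ = δ_n does not converge to 0 in norm; indeed ‖∫_X f_n dμ‖ = 1 for all n. -/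
open MeasureTheory Filter Topology

noncomputable section

/-- Lebesgue measure on `[0,1]`. -/
def lebOn01 : Measure ℝ := volume.restrict (Set.Icc (0:ℝ) 1)

instance : IsFiniteMeasure lebOn01 := by
  unfold lebOn01; infer_instance

/-- `δ_n = n · 𝟙_{[0,1/n]}` (here indexed so that `delta n` is `δ_{n+1}`), as an element of
`E = L¹[0,1]`. -/
def delta (n : ℕ) : Lp ℝ 1 lebOn01 :=
  indicatorConstLp 1 (measurableSet_Icc : MeasurableSet (Set.Icc (0:ℝ) (1/(n+1))))
    (measure_ne_top _ _) ((n : ℝ) + 1)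

lemma lebOn01_Icc (a : ℝ) (ha : 0 ≤ a) (ha1 : a ≤ 1) :
    lebOn01 (Set.Icc 0 a) = ENNReal.ofReal a := by
  rw [lebOn01, Measure.restrict_apply measurableSet_Icc]
  have : Set.Icc (0:ℝ) a ∩ Set.Icc 0 1 = Set.Icc 0 a := by
    apply Set.inter_eq_self_of_subset_left
    exact Set.Icc_subset_Icc le_rfl ha1
  rw [this, Real.volume_Icc, sub_zero]

lemma norm_delta (n : ℕ) : ‖delta n‖ = 1 := by
  rw [delta, norm_indicatorConstLp one_ne_zero ENNReal.one_ne_top]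
  have h1 : (0:ℝ) ≤ 1/(n+1) := by positivity
  have h2 : (1:ℝ)/(n+1) ≤ 1 := by
    rw [div_le_one (by positivity)]; linarith [Nat.cast_nonneg (α := ℝ) n]
  rw [measureReal_def, lebOn01_Icc _ h1 h2, ENNReal.toReal_ofReal h1]
  have hn : ((n:ℝ)+1) ≠ 0 := by positivity
  simp [Real.norm_eq_abs, abs_of_nonneg (by positivity : (0:ℝ) ≤ (n:ℝ)+1)]
  field_simp

/-- the indicator-truncation of `u` as an element of `L¹`. -/
def trunc (u : Lp ℝ 1 lebOn01) (k : ℕ) : Lp ℝ 1 lebOn01 :=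
  ((Lp.memLp u).indicator (measurableSet_Icc :
      MeasurableSet (Set.Icc (0:ℝ) (1/(k+1))))).toLp _

lemma trunc_coeFn (u : Lp ℝ 1 lebOn01) (k : ℕ) :
    ⇑(trunc u k) =ᵐ[lebOn01] (Set.Icc (0:ℝ) (1/(k+1))).indicator u :=
  MemLp.coeFn_toLp _

lemma uo_delta : UoConvSeq delta 0 := by
  intro u hu
  have hu' : (0:ℝ → ℝ) ≤ᵐ[lebOn01] u := (Lp.coeFn_nonneg u).mpr hu
  refine ⟨trunc u, ?_, ?_, ?_⟩
  · -- Antitone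
    intro k l hkl
    rw [← Lp.coeFn_le]
    filter_upwards [trunc_coeFn u k, trunc_coeFn u l, hu'] with t hk hl hut
    rw [hk, hl]
    have hsub : Set.Icc (0:ℝ) (1/(l+1)) ⊆ Set.Icc (0:ℝ) (1/(k+1)) := by
      apply Set.Icc_subset_Icc le_rfl
      apply one_div_le_one_div_of_le (by positivity)
      exact_mod_cast by linarith [Nat.cast_le (α := ℝ).mpr hkl] 
    by_cases ht : t ∈ Set.Icc (0:ℝ) (1/(l+1))
    · rw [Set.indicator_of_mem ht, Set.indicator_of_mem (hsub ht)]
    · rw [Set.indicator_of_notMem ht]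
      by_cases ht' : t ∈ Set.Icc (0:ℝ) (1/(k+1))
      · rw [Set.indicator_of_mem ht']; exact hut
      · rw [Set.indicator_of_notMem ht']
  · constructor
    · -- lower bound
      rintro _ ⟨k, rfl⟩
      rw [← Lp.coeFn_nonneg]
      filter_upwards [trunc_coeFn u k, hu'] with t hk hut
      rw [hk]
      exact Set.indicator_nonneg (fun x _ => hut) t
    · -- greatest lower bound
      intro w hw
      have hall : ∀ k, w ≤ trunc u k := fun k => hw ⟨k, rfl⟩
      have hae : ∀ᵐ t ∂lebOn01, ∀ k : ℕ,
          w t ≤ (Set.Icc (0:ℝ) (1/(k+1))).indicator u t := by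
        rw [ae_all_iff]
        intro k
        filter_upwards [(Lp.coeFn_le w (trunc u k)).mpr (hall k), trunc_coeFn u k]
          with t h1 h2
        rw [← h2]; exact h1
      rw [← Lp.coeFn_le]
      have h0 : lebOn01 ({0} : Set ℝ) = 0 := by
        rw [lebOn01]
        exact le_antisymm (le_trans (Measure.restrict_le_self _)
          (by simp [Real.volume_singleton])) zero_le
      filter_upwards [hae, Lp.coeFn_zero ℝ 1 lebOn01,
        measure_eq_zero_iff_ae_notMem.mp h0] with t ht h0t htne
      rw [h0t]
      simp only [Set.mem_singleton_iff] at htne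
      rcases lt_or_gt_of_ne htne with h | h
      · have := ht 0
        rwa [Set.indicator_of_notMem (by simp [Set.mem_Icc]; intro; linarith)] at this
      · obtain ⟨k, hk⟩ := exists_nat_one_div_lt h
        have := ht k
        rwa [Set.indicator_of_notMem (fun hmem => absurd hmem.2 (not_le.mpr hk))] at this
  · -- eventual bound
    intro k
    refine ⟨k, fun n hn => ?_⟩
    rw [← Lp.coeFn_le]
    simp only [sub_zero]
    filter_upwards [Lp.coeFn_abs (|delta n| ⊓ u), Lp.coeFn_inf |delta n| u,
      Lp.coeFn_abs (delta n),
      indicatorConstLp_coeFn (p := 1) (c := ((n:ℝ)+1))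
        (hs := (measurableSet_Icc : MeasurableSet (Set.Icc (0:ℝ) (1/(n+1)))))
        (hμs := measure_ne_top _ _),
      trunc_coeFn u k, hu'] with t ha hb hc hd he hf
    have hdd : ⇑(delta n) t = (Set.Icc (0:ℝ) (1/(n+1))).indicator (fun _ => (n:ℝ)+1) t := hd
    rw [ha]
    have hb' : (|delta n| ⊓ u) t = |⇑(delta n) t| ⊓ ⇑u t := by
      rw [hb]; show |delta n| t ⊓ u t = _; rw [hc]
    rw [hb', hdd, he]
    have hsub : Set.Icc (0:ℝ) (1/(n+1)) ⊆ Set.Icc (0:ℝ) (1/(k+1)) := by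
      apply Set.Icc_subset_Icc le_rfl
      apply one_div_le_one_div_of_le (by positivity)
      exact_mod_cast by linarith [Nat.cast_le (α := ℝ).mpr hn]
    by_cases ht : t ∈ Set.Icc (0:ℝ) (1/(n+1))
    · rw [Set.indicator_of_mem ht, Set.indicator_of_mem (hsub ht)]
      have habs : |(n:ℝ)+1| = (n:ℝ)+1 := abs_of_nonneg (by positivity)
      rw [habs, abs_of_nonneg (le_inf (by positivity) hf)]
      exact inf_le_right
    · rw [Set.indicator_of_notMem ht]
      have : |(0:ℝ)| ⊓ ⇑u t = 0 := by
        rw [abs_zero]; exact inf_eq_left.mpr hf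
      rw [this, abs_zero]
      exact Set.indicator_nonneg (fun x _ => hf) t

lemma integral_delta (n : ℕ) : ∫ _t : ℝ, delta n ∂lebOn01 = delta n := by
  rw [integral_const]
  have : (lebOn01 Set.univ).toReal = 1 := by
    rw [lebOn01, Measure.restrict_apply_univ, Real.volume_Icc]
    norm_num
  rw [measureReal_def, this, one_smul]

/-- `δ_n` uo-converges to `0` in `L¹[0,1]` (hence the constant functions
`f_n(t) = δ_n` converge to `0` in unbounded order pointwise), `‖δ_n‖ = 1`, but the Bochner
integrals `∫_X f_n dμ` all have norm `1` and do not converge to `0`. -/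
theorem stmt_6 :
    UoConvSeq delta 0 ∧
    (∀ n, ‖delta n‖ = 1) ∧
    (∀ n, ∫ _t : ℝ, delta n ∂lebOn01 = delta n) ∧
    (∀ n, ‖∫ _t : ℝ, delta n ∂lebOn01‖ = 1) ∧
    ¬ Tendsto (fun n => ∫ _t : ℝ, delta n ∂lebOn01) atTop (𝓝 0) := by
  refine ⟨uo_delta, norm_delta, integral_delta, fun n => by rw [integral_delta]; exact norm_delta n, ?_⟩
  intro h
  have h2 : Tendsto (fun n => ‖∫ _t : ℝ, delta n ∂lebOn01‖) atTop (𝓝 0) := by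
    simpa using h.norm
  have h3 : Tendsto (fun _ : ℕ => (1:ℝ)) atTop (𝓝 0) := by
    convert h2 using 1
    funext n
    rw [integral_delta n, norm_delta n]
  exact zero_ne_one (tendsto_nhds_unique h3 tendsto_const_nhds)
end
end

section
/- Let (X, Σ, μ) be a finite measure space and E a KB-space. Then B(X, E, μ) is a KB-space: every increasing, norm bounded sequence of positive Bochner integrable functions converges in the norm ‖f‖ = ∫ ‖f(w)‖ dμ. -/
open MeasureTheory Filter Topology
open scoped ENNReal NNReal

/-- A Banach lattice is a KB-space if every increasing norm bounded sequence of positive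
elements is norm convergent. -/
def KBSpace (G : Type*) [NormedAddCommGroup G] [Lattice G] [HasSolidNorm G]
    [IsOrderedAddMonoid G] : Prop :=
  ∀ x : ℕ → G, Monotone x → (∀ n, 0 ≤ x n) → (∃ M : ℝ, ∀ n, ‖x n‖ ≤ M) →
    ∃ a : G, Tendsto x atTop (𝓝 a)

/-- If `E` is a KB-space, then so is `B(X, E, μ) = L¹(X, E, μ)`. -/
theorem stmt_8 {X : Type*} [MeasurableSpace X] (μ : Measure X) [IsFiniteMeasure μ]
    {E : Type*} [NormedAddCommGroup E] [Lattice E] [HasSolidNorm E] [IsOrderedAddMonoid E]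
    [CompleteSpace E]
    (hE : KBSpace E) : KBSpace (Lp E 1 μ) := by
  classical
  intro x hmono hpos hbdd
  obtain ⟨M, hM⟩ := hbdd
  have hxm : ∀ n, AEStronglyMeasurable (⇑(x n)) μ := fun n => Lp.aestronglyMeasurable (x n)
  -- pointwise a.e. monotonicity and positivity
  have h1 : ∀ᵐ w ∂μ, ∀ n : ℕ, (x n : X → E) w ≤ (x (n + 1) : X → E) w :=
    ae_all_iff.2 fun n => (Lp.coeFn_le _ _).2 (hmono (Nat.le_succ n))
  have h0 : ∀ᵐ w ∂μ, ∀ n : ℕ, (0 : E) ≤ (x n : X → E) w :=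
    ae_all_iff.2 fun n => (Lp.coeFn_nonneg (x n)).2 (hpos n)
  -- the dominating function
  set g : X → ℝ≥0∞ := fun w => ⨆ n, (‖(x n : X → E) w‖₊ : ℝ≥0∞) with hg_def
  have hgmeas : AEMeasurable g μ := AEMeasurable.iSup fun n => (hxm n).enorm
  have hmono_nn : ∀ᵐ w ∂μ, Monotone fun n => (‖(x n : X → E) w‖₊ : ℝ≥0∞) := by
    filter_upwards [h1, h0] with w hw1 hw0
    have hm : Monotone fun n => (x n : X → E) w := monotone_nat_of_le_succ hw1
    intro n m h
    have hnm : ‖(x n : X → E) w‖ ≤ ‖(x m : X → E) w‖ := by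
      apply norm_le_norm_of_abs_le_abs
      rw [abs_of_nonneg (hw0 n), abs_of_nonneg (hw0 m)]
      exact hm h
    have h2 : ‖(x n : X → E) w‖₊ ≤ ‖(x m : X → E) w‖₊ := by
      rwa [← NNReal.coe_le_coe, coe_nnnorm, coe_nnnorm]
    exact ENNReal.coe_le_coe.2 h2
  have hsn : ∀ n, ∫⁻ w, (‖(x n : X → E) w‖₊ : ℝ≥0∞) ∂μ ≤ ENNReal.ofReal M := by
    intro n
    have h1' : ∫⁻ w, (‖(x n : X → E) w‖₊ : ℝ≥0∞) ∂μ = eLpNorm (x n) 1 μ :=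
      (eLpNorm_one_eq_lintegral_enorm (f := (x n : X → E))).symm
    rw [h1', ← ENNReal.ofReal_toReal (Lp.eLpNorm_ne_top (x n))]
    exact ENNReal.ofReal_le_ofReal (by rw [← Lp.norm_def]; exact hM n)
  have hg_int : ∫⁻ w, g w ∂μ ≤ ENNReal.ofReal M := by
    rw [hg_def, lintegral_iSup' (f := fun n w => (‖(x n : X → E) w‖₊ : ℝ≥0∞)) (fun n => (hxm n).enorm) hmono_nn]
    exact iSup_le hsn
  have hg_int_ne : ∫⁻ w, g w ∂μ ≠ ∞ :=
    (lt_of_le_of_lt hg_int ENNReal.ofReal_lt_top).ne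
  have hg_lt : ∀ᵐ w ∂μ, g w < ∞ := ae_lt_top' hgmeas hg_int_ne
  -- pointwise limit
  have hL : ∃ L : X → E, ∀ᵐ w ∂μ, Tendsto (fun n => (x n : X → E) w) atTop (𝓝 (L w)) := by
    refine ⟨fun w => if h : ∃ a, Tendsto (fun n => (x n : X → E) w) atTop (𝓝 a)
      then h.choose else 0, ?_⟩
    filter_upwards [h1, h0, hg_lt] with w hw1 hw0 hwg
    have hm : Monotone fun n => (x n : X → E) w := monotone_nat_of_le_succ hw1
    have hbd : ∀ n, ‖(x n : X → E) w‖ ≤ (g w).toReal := by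
      intro n
      have hle : (‖(x n : X → E) w‖₊ : ℝ≥0∞) ≤ g w :=
        le_iSup (fun n => ((‖(x n : X → E) w‖₊ : ℝ≥0∞))) n
      calc ‖(x n : X → E) w‖ = ((‖(x n : X → E) w‖₊ : ℝ≥0∞)).toReal := by simp
        _ ≤ (g w).toReal := ENNReal.toReal_mono hwg.ne hle
    obtain ⟨a, ha⟩ := hE (fun n => (x n : X → E) w) hm hw0 ⟨(g w).toReal, hbd⟩
    have hex : ∃ a, Tendsto (fun n => (x n : X → E) w) atTop (𝓝 a) := ⟨a, ha⟩
    rw [dif_pos hex]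
    exact hex.choose_spec
  obtain ⟨L, htend⟩ := hL
  have hLmeas : AEStronglyMeasurable L μ := aestronglyMeasurable_of_tendsto_ae atTop hxm htend
  have hLbd : ∀ᵐ w ∂μ, (‖L w‖₊ : ℝ≥0∞) ≤ g w := by
    filter_upwards [htend, hg_lt] with w hw hwg
    have h3 : ‖L w‖ ≤ (g w).toReal := by
      refine le_of_tendsto' hw.norm fun n => ?_
      have hle : (‖(x n : X → E) w‖₊ : ℝ≥0∞) ≤ g w :=
        le_iSup (fun n => ((‖(x n : X → E) w‖₊ : ℝ≥0∞))) n
      calc ‖(x n : X → E) w‖ = ((‖(x n : X → E) w‖₊ : ℝ≥0∞)).toReal := by simp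
        _ ≤ (g w).toReal := ENNReal.toReal_mono hwg.ne hle
    calc (‖L w‖₊ : ℝ≥0∞) = ENNReal.ofReal ‖L w‖ := (ofReal_norm _).symm
      _ ≤ ENNReal.ofReal (g w).toReal := ENNReal.ofReal_le_ofReal h3
      _ = g w := ENNReal.ofReal_toReal hwg.ne
  have hLmem : MemLp L 1 μ := by
    refine ⟨hLmeas, ?_⟩
    rw [eLpNorm_one_eq_lintegral_enorm]
    exact lt_of_le_of_lt (lintegral_mono_ae hLbd)
      (lt_of_le_of_lt hg_int ENNReal.ofReal_lt_top)
  haveI : Fact ((1 : ℝ≥0∞) ≤ 1) := ⟨le_rfl⟩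
  refine ⟨hLmem.toLp L, Lp.tendsto_Lp_of_tendsto_eLpNorm L hLmem ?_⟩
  -- dominated convergence for the L¹ norms
  have key : Tendsto (fun n => ∫⁻ w, (‖(x n : X → E) w - L w‖₊ : ℝ≥0∞) ∂μ) atTop
      (𝓝 (∫⁻ _, (0 : ℝ≥0∞) ∂μ)) := by
    refine tendsto_lintegral_of_dominated_convergence' (fun w => g w + g w)
      (fun n => ((hxm n).sub hLmeas).enorm) (fun n => ?_) ?_ ?_
    · filter_upwards [hLbd] with w hw
      calc (‖(x n : X → E) w - L w‖₊ : ℝ≥0∞)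
          ≤ (‖(x n : X → E) w‖₊ : ℝ≥0∞) + (‖L w‖₊ : ℝ≥0∞) := by
            exact_mod_cast nnnorm_sub_le _ _
        _ ≤ g w + g w := add_le_add (le_iSup (fun n => ((‖(x n : X → E) w‖₊ : ℝ≥0∞))) n) hw
    · rw [lintegral_add_left' hgmeas]
      exact (lt_of_le_of_lt (add_le_add hg_int hg_int)
        (by exact ENNReal.add_lt_top.2 ⟨ENNReal.ofReal_lt_top, ENNReal.ofReal_lt_top⟩)).ne
    · filter_upwards [htend] with w hw
      have h4 : Tendsto (fun n => (x n : X → E) w - L w) atTop (𝓝 0) := by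
        simpa using hw.sub_const (L w)
      have h5 : Tendsto (fun n => (‖(x n : X → E) w - L w‖₊ : ℝ≥0∞)) atTop (𝓝 0) := by
        have := h4.nnnorm
        rw [nnnorm_zero] at this
        simpa using (ENNReal.tendsto_coe.2 this)
      exact h5
  rw [lintegral_zero] at key
  refine key.congr fun n => ?_
  rw [eLpNorm_one_eq_lintegral_enorm]
  rfl
end

section
/- Let (X, Σ, μ) be a finite measure space with μ(X) > 0 and E a Banach lattice. If the dual Banach lattice B(X, E, μ)′ is order continuous, then E′ is order continuous. -/
open MeasureTheory Filter Topology

/-- The canonical (pointwise-on-positive-elements) order on the topological dual of a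
Banach lattice: `f ≤ g` iff `f x ≤ g x` for all `x ≥ 0`. -/
def DualLe {G : Type*} [NormedAddCommGroup G] [Lattice G] [HasSolidNorm G] [IsOrderedAddMonoid G] [NormedSpace ℝ G]
    (f g : G →L[ℝ] ℝ) : Prop := ∀ x : G, 0 ≤ x → f x ≤ g x

/-- The dual Banach lattice of `G` is order continuous: every downward directed net of
functionals with infimum `0` (in the dual order) converges to `0` in the dual norm. -/
def DualOrderCont (G : Type*) [NormedAddCommGroup G] [Lattice G] [HasSolidNorm G] [IsOrderedAddMonoid G] [NormedSpace ℝ G] : Prop :=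
  ∀ (ι : Type) [Preorder ι] [IsDirected ι (· ≤ ·)] [Nonempty ι] (F : ι → G →L[ℝ] ℝ),
    (∀ i j, i ≤ j → DualLe (F j) (F i)) →
    (∀ i, DualLe 0 (F i)) →
    (∀ c : G →L[ℝ] ℝ, (∀ i, DualLe c (F i)) → DualLe c 0) →
    Tendsto (fun i => ‖F i‖) atTop (𝓝 0)

/-- Key lemma: for a downward directed net of positive functionals whose only lower bounds
are nonpositive, the pointwise infimum at every positive element is `0`. -/
lemma pointwise_inf_zero {G : Type*} [NormedAddCommGroup G] [Lattice G] [HasSolidNorm G] [IsOrderedAddMonoid G] [NormedSpace ℝ G]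
    {ι : Type} [Preorder ι] [IsDirected ι (· ≤ ·)] [Nonempty ι] (F : ι → G →L[ℝ] ℝ)
    (hmono : ∀ i j, i ≤ j → DualLe (F j) (F i))
    (hpos : ∀ i, DualLe 0 (F i))
    (hinf : ∀ c : G →L[ℝ] ℝ, (∀ i, DualLe c (F i)) → DualLe c 0)
    {e : G} (he : 0 ≤ e) {ε : ℝ} (hε : 0 < ε) : ∃ i, F i e < ε := by
  classical
  set h : G → ℝ := fun x => ⨅ i, F i x with hh
  have hbdd : ∀ {x : G}, 0 ≤ x → BddBelow (Set.range fun i => F i x) := by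
    intro x hx
    refine ⟨0, ?_⟩
    rintro _ ⟨i, rfl⟩
    simpa using hpos i x hx
  have hnn : ∀ {x : G}, 0 ≤ x → 0 ≤ h x := by
    intro x hx
    exact le_ciInf fun i => by simpa using hpos i x hx
  have hle : ∀ (i : ι) {x : G}, 0 ≤ x → h x ≤ F i x := by
    intro i x hx
    exact ciInf_le (hbdd hx) i
  have hadd : ∀ {a b : G}, 0 ≤ a → 0 ≤ b → h (a + b) = h a + h b := by
    intro a b ha hb
    apply le_antisymm
    · refine le_of_forall_pos_le_add ?_
      intro δ hδ
      obtain ⟨i, hi⟩ := exists_lt_of_ciInf_lt (show h a < h a + δ / 2 by linarith)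
      obtain ⟨j, hj⟩ := exists_lt_of_ciInf_lt (show h b < h b + δ / 2 by linarith)
      obtain ⟨k, hki, hkj⟩ := exists_ge_ge i j
      calc h (a + b) ≤ F k (a + b) := hle k (add_nonneg ha hb)
        _ = F k a + F k b := map_add _ _ _
        _ ≤ F i a + F j b := add_le_add (hmono i k hki a ha) (hmono j k hkj b hb)
        _ ≤ h a + δ / 2 + (h b + δ / 2) := add_le_add hi.le hj.le
        _ = h a + h b + δ := by ring
    · refine le_ciInf fun i => ?_
      rw [map_add]
      exact add_le_add (hle i ha) (hle i hb)
  have h0 : h (0 : G) = 0 := by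
    simp only [hh, map_zero]
    exact ciInf_const
  set cfun : G → ℝ := fun x => h x⁺ - h x⁻ with hcfun
  have key3 : ∀ z : G, z⁺ = z + z⁻ := fun z => eq_add_of_sub_eq (posPart_sub_negPart z)
  have cadd : ∀ x y : G, cfun (x + y) = cfun x + cfun y := by
    intro x y
    have hid : (x + y)⁺ + (x⁻ + y⁻) = (x⁺ + y⁺) + (x + y)⁻ := by
      rw [key3 (x + y), key3 x, key3 y]; abel
    have h1 : h ((x + y)⁺ + (x⁻ + y⁻)) = h (x + y)⁺ + (h x⁻ + h y⁻) := by
      rw [hadd (posPart_nonneg _) (add_nonneg (negPart_nonneg _) (negPart_nonneg _)),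
        hadd (negPart_nonneg _) (negPart_nonneg _)]
    have h2 : h ((x⁺ + y⁺) + (x + y)⁻) = (h x⁺ + h y⁺) + h (x + y)⁻ := by
      rw [hadd (add_nonneg (posPart_nonneg _) (posPart_nonneg _)) (negPart_nonneg _),
        hadd (posPart_nonneg _) (posPart_nonneg _)]
    have := hid ▸ h1
    rw [h2] at this
    simp only [hcfun]
    linarith
  obtain ⟨i₀⟩ := (inferInstance : Nonempty ι)
  have hboundpos : ∀ {x : G}, 0 ≤ x → h x ≤ ‖F i₀‖ * ‖x‖ := by
    intro x hx
    calc h x ≤ F i₀ x := hle i₀ hx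
      _ ≤ |F i₀ x| := le_abs_self _
      _ = ‖F i₀ x‖ := rfl
      _ ≤ ‖F i₀‖ * ‖x‖ := (F i₀).le_opNorm x
  have habs : ∀ x : G, |cfun x| ≤ 2 * ‖F i₀‖ * ‖x‖ := by
    intro x
    have hp : ‖x⁺‖ ≤ ‖x‖ := by
      apply norm_le_norm_of_abs_le_abs
      rw [abs_of_nonneg (posPart_nonneg x)]
      exact sup_le (le_abs_self x) (abs_nonneg x)
    have hn : ‖x⁻‖ ≤ ‖x‖ := by
      apply norm_le_norm_of_abs_le_abs
      rw [abs_of_nonneg (negPart_nonneg x)]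
      exact sup_le (neg_le_abs x) (abs_nonneg x)
    have b1 : h x⁺ ≤ ‖F i₀‖ * ‖x‖ :=
      (hboundpos (posPart_nonneg x)).trans
        (mul_le_mul_of_nonneg_left hp (norm_nonneg _))
    have b2 : h x⁻ ≤ ‖F i₀‖ * ‖x‖ :=
      (hboundpos (negPart_nonneg x)).trans
        (mul_le_mul_of_nonneg_left hn (norm_nonneg _))
    have nn1 : 0 ≤ h x⁺ := hnn (posPart_nonneg x)
    have nn2 : 0 ≤ h x⁻ := hnn (negPart_nonneg x)
    rw [abs_le]
    constructor <;> simp only [hcfun] <;> linarith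
  have hcont : Continuous cfun := by
    have hsub : ∀ x y : G, cfun x - cfun y = cfun (x - y) := by
      intro x y
      have := cadd (x - y) y
      rw [sub_add_cancel] at this
      linarith
    have : LipschitzWith (Real.toNNReal (2 * ‖F i₀‖)) cfun := by
      apply LipschitzWith.of_dist_le_mul
      intro x y
      rw [Real.dist_eq, hsub x y, dist_eq_norm]
      calc |cfun (x - y)| ≤ 2 * ‖F i₀‖ * ‖x - y‖ := habs _
        _ ≤ (Real.toNNReal (2 * ‖F i₀‖) : ℝ) * ‖x - y‖ := by
            apply mul_le_mul_of_nonneg_right _ (norm_nonneg _)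
            exact Real.le_coe_toNNReal _
    exact this.continuous
  set cm : G →+ ℝ := AddMonoidHom.mk' cfun cadd with hcm
  set c : G →L[ℝ] ℝ := cm.toRealLinearMap hcont with hc
  have hc_apply : ∀ x : G, c x = cfun x := by
    intro x
    rw [hc]
    exact congrFun (cm.coe_toRealLinearMap hcont) x
  have hcpos : ∀ {x : G}, 0 ≤ x → c x = h x := by
    intro x hx
    rw [hc_apply]
    simp only [hcfun]
    rw [posPart_eq_self.mpr hx, negPart_eq_zero.mpr hx, h0, sub_zero]
  have hclb : ∀ i, DualLe c (F i) := by
    intro i x hx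
    rw [hcpos hx]
    exact hle i hx
  have hfin := hinf c hclb e he
  rw [hcpos he] at hfin
  simp only [ContinuousLinearMap.zero_apply] at hfin
  have : h e = 0 := le_antisymm hfin (hnn he)
  have hlt : (⨅ i, F i e) < ε := by
    rw [show (⨅ i, F i e) = h e from rfl, this]; exact hε
  exact exists_lt_of_ciInf_lt hlt

/-- If `μ(X) > 0` and the dual of `B(X, E, μ)` is order continuous, then the
dual of `E` is order continuous. -/
theorem stmt_12 {X : Type*} [MeasurableSpace X] (μ : Measure X) [IsFiniteMeasure μ]
    (hμ : 0 < μ Set.univ) {E : Type*} [NormedAddCommGroup E] [Lattice E] [HasSolidNorm E] [IsOrderedAddMonoid E] [NormedSpace ℝ E]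
    (hB : DualOrderCont (Lp E 1 μ)) : DualOrderCont E := by
  intro ι _ _ _ F hmono hpos hinf
  classical
  set m : ℝ := (μ Set.univ).toReal with hm
  have hm0 : 0 < m := ENNReal.toReal_pos hμ.ne' (measure_ne_top μ _)
  -- the transported net on `Lp E 1 μ`
  set G : ι → Lp E 1 μ →L[ℝ] ℝ :=
    fun i => (L1.integralCLM).comp ((F i).compLpL 1 μ) with hGdef
  have hG_apply : ∀ (i : ι) (f : Lp E 1 μ), G i f = ∫ x, F i (f x) ∂μ := by
    intro i f
    have h1 : G i f = L1.integralCLM ((F i).compLp f) := rfl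
    rw [h1, ← L1.integral_eq, L1.integral_eq_integral]
    exact integral_congr_ae ((F i).coeFn_compLp f)
  have hint : ∀ (i : ι) (f : Lp E 1 μ), Integrable (fun x => F i (f x)) μ := by
    intro i f
    exact (L1.integrable_coeFn ((F i).compLp f)).congr ((F i).coeFn_compLp f)
  have hFmono : ∀ (i : ι) {a b : E}, a ≤ b → F i a ≤ F i b := by
    intro i a b hab
    have := hpos i (b - a) (sub_nonneg.mpr hab)
    simp only [ContinuousLinearMap.zero_apply, map_sub] at this
    linarith
  have hGmono : ∀ (i : ι) (u v : Lp E 1 μ), u ≤ v → G i u ≤ G i v := by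
    intro i u v huv
    rw [hG_apply, hG_apply]
    refine integral_mono_ae (hint i u) (hint i v) ?_
    filter_upwards [(Lp.coeFn_le u v).mpr huv] with x hx
    exact hFmono i hx
  have hGpos : ∀ i, DualLe 0 (G i) := by
    intro i f hf
    have := hGmono i 0 f hf
    simpa using this
  have hGanti : ∀ i j, i ≤ j → DualLe (G j) (G i) := by
    intro i j hij f hf
    rw [hG_apply, hG_apply]
    refine integral_mono_ae (hint j f) (hint i f) ?_
    filter_upwards [(Lp.coeFn_nonneg f).mpr hf] with x hx
    exact hmono i j hij (f x) hx
  -- constants embed into Lp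
  set K : E → Lp E 1 μ :=
    fun e => indicatorConstLp 1 MeasurableSet.univ (measure_ne_top μ _) e with hK
  have hK_apply : ∀ e : E, ⇑(K e) =ᵐ[μ] fun _ => e := by
    intro e
    filter_upwards [indicatorConstLp_coeFn (p := 1) (μ := μ)
      (hs := MeasurableSet.univ) (hμs := measure_ne_top μ Set.univ) (c := e)] with x hx
    simp only [hK]
    rw [hx, Set.indicator_univ]
  have hKpos : ∀ {e : E}, 0 ≤ e → 0 ≤ K e := by
    intro e he
    rw [← Lp.coeFn_nonneg]
    filter_upwards [hK_apply e] with x hx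
    rw [hx]
    exact he
  have hGK : ∀ (i : ι) (e : E), G i (K e) = m * F i e := by
    intro i e
    rw [hG_apply]
    have : ∫ x, F i ((K e) x) ∂μ = ∫ _, F i e ∂μ := by
      refine integral_congr_ae ?_
      filter_upwards [hK_apply e] with x hx
      rw [hx]
    rw [this, integral_const, smul_eq_mul, hm, measureReal_def]
  have hKnorm : ∀ e : E, ‖K e‖ = ‖e‖ * m := by
    intro e
    rw [hK]
    rw [norm_indicatorConstLp one_ne_zero ENNReal.one_ne_top]
    simp [hm]
    exact Or.inl rfl
  -- the infimum-zero property is transported to G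
  have hkey : ∀ {e : E}, 0 ≤ e → ∀ {ε : ℝ}, 0 < ε → ∃ i, F i e < ε := by
    intro e he ε hε
    exact pointwise_inf_zero F hmono hpos hinf he hε
  obtain ⟨i₀⟩ := (inferInstance : Nonempty ι)
  have hX : Nonempty X := Set.nonempty_iff_univ_nonempty.mpr (nonempty_of_measure_ne_zero hμ.ne')
  have hGinf : ∀ c : Lp E 1 μ →L[ℝ] ℝ, (∀ i, DualLe c (G i)) → DualLe c 0 := by
    intro c hc f hf
    simp only [ContinuousLinearMap.zero_apply]
    set C : ℝ := ‖G i₀‖ + m with hCdef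
    have hC : 0 < C := by positivity
    have main : ∀ ε : ℝ, 0 < ε → c f ≤ C * ε := by
      intro ε hε
      -- simple function approximation
      have hfm : MemLp (⇑f) 1 μ := Lp.memLp f
      obtain ⟨s, hs, hsm⟩ := hfm.exists_simpleFunc_eLpNorm_sub_lt ENNReal.one_ne_top
        (ENNReal.ofReal_pos.mpr hε).ne'
      obtain ⟨x₀⟩ := hX
      have hrange : s.range.Nonempty := ⟨s x₀, SimpleFunc.mem_range_self s x₀⟩
      set e : E := s.range.sup' hrange (fun a => a⁺) with he_def
      have he0 : 0 ≤ e :=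
        le_trans (posPart_nonneg (s x₀)) (Finset.le_sup' _ (SimpleFunc.mem_range_self s x₀))
      have hse : ∀ x, s x ≤ e := fun x =>
        le_trans (le_posPart _) (Finset.le_sup' _ (SimpleFunc.mem_range_self s x))
      set k : Lp E 1 μ := K e with hk
      have h1 : 0 ≤ f - f ⊓ k := sub_nonneg.mpr inf_le_left
      have h2 : 0 ≤ f ⊓ k := le_inf hf (hKpos he0)
      set sLp : Lp E 1 μ := hsm.toLp s with hsLp
      have hsk : sLp ≤ k := by
        rw [← Lp.coeFn_le]
        filter_upwards [hsm.coeFn_toLp, hK_apply e] with x ha hb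
        rw [ha, hb]
        exact hse x
      have hfk_le : f - f ⊓ k ≤ |f - sLp| := by
        rw [sub_inf]
        refine sup_le ?_ ?_
        · rw [sub_self]; exact abs_nonneg _
        · exact (sub_le_sub_left hsk f).trans (le_abs_self _)
      have hnorm1 : ‖f - f ⊓ k‖ ≤ ‖f - sLp‖ := by
        apply norm_le_norm_of_abs_le_abs
        rw [abs_of_nonneg h1]
        exact hfk_le
      have hnorm2 : ‖f - sLp‖ < ε := by
        have hcongr : eLpNorm (⇑(f - sLp)) 1 μ = eLpNorm (⇑f - ⇑s) 1 μ := by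
          refine eLpNorm_congr_ae ?_
          filter_upwards [Lp.coeFn_sub f sLp, hsm.coeFn_toLp] with x ha hb
          simp only [Pi.sub_apply] at ha ⊢
          rw [ha, hb]
        rw [Lp.norm_def, hcongr]
        exact ENNReal.toReal_lt_of_lt_ofReal hs
      obtain ⟨i₁, hi₁⟩ := hkey he0 hε
      obtain ⟨i, hii₀, hii₁⟩ := exists_ge_ge i₀ i₁
      have hFie : F i e < ε := lt_of_le_of_lt (hmono i₁ i hii₁ e he0) hi₁
      have hGnorm : G i₀ (f - f ⊓ k) ≤ ‖G i₀‖ * ‖f - f ⊓ k‖ :=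
        le_trans (le_abs_self _) ((G i₀).le_opNorm _)
      calc c f = c (f - f ⊓ k) + c (f ⊓ k) := by rw [← map_add]; congr 1; abel
        _ ≤ G i (f - f ⊓ k) + G i (f ⊓ k) := add_le_add (hc i _ h1) (hc i _ h2)
        _ ≤ G i₀ (f - f ⊓ k) + G i k :=
            add_le_add (hGanti i₀ i hii₀ _ h1) (hGmono i _ _ inf_le_right)
        _ = G i₀ (f - f ⊓ k) + m * F i e := by rw [hGK]
        _ ≤ ‖G i₀‖ * ‖f - f ⊓ k‖ + m * F i e := by gcongr
        _ ≤ ‖G i₀‖ * ε + m * ε := by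
            refine add_le_add ?_ (mul_le_mul_of_nonneg_left hFie.le hm0.le)
            exact mul_le_mul_of_nonneg_left (hnorm1.trans hnorm2.le) (norm_nonneg _)
        _ = C * ε := by rw [hCdef]; ring
    by_contra hcf
    push_neg at hcf
    have := main (c f / (2 * C)) (by positivity)
    rw [mul_div_assoc'] at this
    have h2C : C * c f / (2 * C) = c f / 2 := by field_simp
    rw [h2C] at this
    linarith
  -- apply order continuity of the dual of Lp
  have hconv : Tendsto (fun i => ‖G i‖) atTop (𝓝 0) := hB ι G hGanti hGpos hGinf
  have hFG : ∀ i, ‖F i‖ ≤ ‖G i‖ := by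
    intro i
    refine (F i).opNorm_le_bound (norm_nonneg _) fun e => ?_
    have h1 : ‖G i (K e)‖ ≤ ‖G i‖ * (‖e‖ * m) := by
      rw [← hKnorm]
      exact (G i).le_opNorm _
    rw [hGK] at h1
    have h2 : ‖(m : ℝ) * F i e‖ = m * ‖F i e‖ := by
      rw [norm_mul, Real.norm_eq_abs, abs_of_nonneg hm0.le]
    rw [h2] at h1
    have h3 : m * ‖F i e‖ ≤ m * (‖G i‖ * ‖e‖) := by
      calc m * ‖F i e‖ ≤ ‖G i‖ * (‖e‖ * m) := h1
        _ = m * (‖G i‖ * ‖e‖) := by ring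
    exact le_of_mul_le_mul_left h3 hm0
  exact squeeze_zero (fun i => norm_nonneg _) hFG hconv
end

section
/- Let (X, Σ, μ) be a finite measure space and E a σ-order continuous Banach lattice. If (f_n) is an increasing, norm bounded sequence of positive Bochner integrable functions X → E such that f_n(w) → f(w) in norm for a.e. w, then f is Bochner integrable and ∫ f_n dμ → ∫ f dμ in norm. -/
open MeasureTheory Filter Topology

/-- Monotone convergence theorem for Bochner integrals valued in a σ-order
continuous Banach lattice: an increasing, norm bounded sequence of positive Bochner
integrable functions converging pointwise a.e. has a Bochner integrable limit and the
integrals converge in norm. -/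
theorem stmt_15 {X : Type*} [MeasurableSpace X] (μ : Measure X) [IsFiniteMeasure μ]
    {E : Type*} [NormedAddCommGroup E] [Lattice E] [HasSolidNorm E] [IsOrderedAddMonoid E]
    [NormedSpace ℝ E] [CompleteSpace E]
    (hE : SigmaOrderCont E)
    (f : ℕ → X → E) (g : X → E)
    (hf : ∀ n, Integrable (f n) μ)
    (hpos : ∀ n, ∀ᵐ w ∂μ, 0 ≤ f n w)
    (hmono : ∀ᵐ w ∂μ, Monotone fun n => f n w)
    (hbd : ∃ M : ℝ, ∀ n, ∫ w, ‖f n w‖ ∂μ ≤ M)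
    (hlim : ∀ᵐ w ∂μ, Tendsto (fun n => f n w) atTop (𝓝 (g w))) :
    Integrable g μ ∧
    Tendsto (fun n => ∫ w, f n w ∂μ) atTop (𝓝 (∫ w, g w ∂μ)) := by
  obtain ⟨M, hM⟩ := hbd
  -- g is a.e. strongly measurable
  have hgm : AEStronglyMeasurable g μ :=
    aestronglyMeasurable_of_tendsto_ae atTop (fun n => (hf n).1) hlim
  -- a.e., f n ≤ g for all n
  have hle : ∀ᵐ w ∂μ, ∀ n, f n w ≤ g w := by
    filter_upwards [hmono, hlim] with w hm hl n
    exact ge_of_tendsto hl (eventually_atTop.2 ⟨n, fun m hmn => hm hmn⟩)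
  -- norm bound: ‖f n w‖ ≤ ‖g w‖
  have hnorm : ∀ n, ∀ᵐ w ∂μ, ‖f n w‖ ≤ ‖g w‖ := by
    intro n
    filter_upwards [hpos n, hle] with w hp hl
    have h1 : |f n w| ≤ |g w| := by
      rw [abs_of_nonneg hp, abs_of_nonneg (hp.trans (hl n))]
      exact hl n
    exact HasSolidNorm.solid h1
  -- g is integrable via Fatou
  have hgint : Integrable g μ := by
    refine ⟨hgm, ?_⟩
    rw [show HasFiniteIntegral g μ ↔ (∫⁻ w, (‖g w‖₊ : ENNReal) ∂μ) < ⊤ from Iff.rfl]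
    have hFatou : ∫⁻ w, ‖g w‖₊ ∂μ ≤ atTop.liminf fun n => ∫⁻ w, ‖f n w‖₊ ∂μ := by
      have h1 : ∫⁻ w, ‖g w‖₊ ∂μ = ∫⁻ w, atTop.liminf (fun n => (‖f n w‖₊ : ENNReal)) ∂μ := by
        refine lintegral_congr_ae ?_
        filter_upwards [hlim] with w hl
        exact ((ENNReal.tendsto_coe.2 hl.nnnorm).liminf_eq).symm
      rw [h1]
      exact lintegral_liminf_le' fun n => (hf n).1.enorm
    refine lt_of_le_of_lt hFatou ?_
    refine lt_of_le_of_lt (liminf_le_of_frequently_le' ?_) (lt_of_le_of_lt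
      (le_refl (ENNReal.ofReal M)) ENNReal.ofReal_lt_top)
    refine Frequently.of_forall fun n => ?_
    exact (ofReal_integral_norm_eq_lintegral_enorm (hf n)).symm.trans_le
      (ENNReal.ofReal_le_ofReal (hM n))
  refine ⟨hgint, ?_⟩
  exact tendsto_integral_of_dominated_convergence (fun w => ‖g w‖)
    (fun n => (hf n).1) hgint.norm hnorm hlim
end
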